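/- Every RTM with stay transitions can be simulated by an ordinary RTM up to divergence-preserving branching bisimilarity: for every RTM with transitions allowing the head to stay (label S in addition to L, R), there is an RTM using only L and R moves whose associated transition system is divergence-preserving branching bisimilar to that of the original machine. -/

import Mathlib

/-- A labelled transition system over actions `A` together with the silent action `τ`
(represented by `none`). -/
structure LTS (A : Type) where
  S : Type
  tr : S → Option A → S → Prop
  init : S

namespace LTS

variable {A : Type}

/-- Reflexive-transitive closure of τ-steps, `s ⇒ t`. -/
def Star (T : LTS A) : T.S → T.S → Prop :=
  Relation.ReflTransGen (fun s t => T.tr s none t)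

/-- `s →(a) t`: either `s →a t`, or `a = τ` and `s = t`. -/
def OptStep (T : LTS A) (s : T.S) (a : Option A) (t : T.S) : Prop :=
  T.tr s a t ∨ (a = none ∧ s = t)

/-- `R` is a branching bisimulation from `T₁` to `T₂`. -/
def IsBB (T₁ T₂ : LTS A) (R : T₁.S → T₂.S → Prop) : Prop :=
  (∀ s₁ s₂, R s₁ s₂ → ∀ a s₁', T₁.tr s₁ a s₁' →
    ∃ s₂'' s₂', T₂.Star s₂ s₂'' ∧ T₂.OptStep s₂'' a s₂' ∧ R s₁ s₂'' ∧ R s₁' s₂') ∧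
  (∀ s₁ s₂, R s₁ s₂ → ∀ a s₂', T₂.tr s₂ a s₂' →
    ∃ s₁'' s₁', T₁.Star s₁ s₁'' ∧ T₁.OptStep s₁'' a s₁' ∧ R s₁'' s₂ ∧ R s₁' s₂')

/-- `T₁` and `T₂` are branching bisimilar. -/
def BBisim (T₁ T₂ : LTS A) : Prop :=
  ∃ R, IsBB T₁ T₂ R ∧ R T₁.init T₂.init

end LTS

namespace LTS

variable {A : Type}

/-- `R` is a divergence-preserving branching bisimulation from `T₁` to `T₂`. -/
def IsDPBB (T₁ T₂ : LTS A) (R : T₁.S → T₂.S → Prop) : Prop :=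
  IsBB T₁ T₂ R ∧
  (∀ s₁ s₂, R s₁ s₂ → ∀ f : ℕ → T₁.S, f 0 = s₁ →
    (∀ i, T₁.tr (f i) none (f (i + 1))) → (∀ i, R (f i) s₂) →
    ∃ s₂', Relation.TransGen (fun a b => T₂.tr a none b) s₂ s₂' ∧ ∃ i, R (f i) s₂') ∧
  (∀ s₁ s₂, R s₁ s₂ → ∀ f : ℕ → T₂.S, f 0 = s₂ →
    (∀ i, T₂.tr (f i) none (f (i + 1))) → (∀ i, R s₁ (f i)) →
    ∃ s₁', Relation.TransGen (fun a b => T₁.tr a none b) s₁ s₁' ∧ ∃ i, R s₁' (f i))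

/-- `T₁` and `T₂` are divergence-preserving branching bisimilar. -/
def BBisimD (T₁ T₂ : LTS A) : Prop :=
  ∃ R, IsDPBB T₁ T₂ R ∧ R T₁.init T₂.init

end LTS

/-- Tape head movements. -/
inductive Move where
  | L : Move
  | R : Move

/-- A reactive Turing machine over actions `A` (with τ as `none`) and tape alphabet `D`:
a finite set of states, a transition relation `tr s d a e m t`, and an initial state. -/
structure RTM (A D : Type) where
  Q : Type
  fin : Finite Q
  tr : Q → D → Option A → D → Move → Q → Prop
  init : Q

/-- Moving the head left after writing `e` (left part of the tape stored reversed). -/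
def moveL {D : Type} (blank : D) (l : List D) (e : D) (r : List D) :
    List D × D × List D :=
  match l with
  | [] => ([], blank, e :: r)
  | h :: t => (t, h, e :: r)

/-- Moving the head right after writing `e`. -/
def moveR {D : Type} (blank : D) (l : List D) (e : D) (r : List D) :
    List D × D × List D :=
  match r with
  | [] => (e :: l, blank, [])
  | h :: t => (e :: l, h, t)

/-- The transition system associated with an RTM: states are configurations
(control state together with a tape instance), the initial state is the initial
control state with the everywhere-blank tape. -/
def RTM.lts {A D : Type} (blank : D) (M : RTM A D) : LTS A where
  S := M.Q × List D × D × List D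
  init := (M.init, [], blank, [])
  tr := fun c a c' =>
    ∃ e, (M.tr c.1 c.2.2.1 a e Move.L c'.1 ∧ c'.2 = moveL blank c.2.1 e c.2.2.2) ∨
         (M.tr c.1 c.2.2.1 a e Move.R c'.1 ∧ c'.2 = moveR blank c.2.1 e c.2.2.2)

/-- Tape head movements including the stay move. -/
inductive MoveSt where
  | L : MoveSt
  | R : MoveSt
  | St : MoveSt

/-- A reactive Turing machine with stay transitions. -/
structure RTMst (A D : Type) where
  Q : Type
  fin : Finite Q
  tr : Q → D → Option A → D → MoveSt → Q → Prop
  init : Q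

/-- The transition system associated with an RTM with stay transitions. -/
def RTMst.lts {A D : Type} (blank : D) (M : RTMst A D) : LTS A where
  S := M.Q × List D × D × List D
  init := (M.init, [], blank, [])
  tr := fun c a c' =>
    ∃ e, (M.tr c.1 c.2.2.1 a e MoveSt.L c'.1 ∧ c'.2 = moveL blank c.2.1 e c.2.2.2) ∨
         (M.tr c.1 c.2.2.1 a e MoveSt.R c'.1 ∧ c'.2 = moveR blank c.2.1 e c.2.2.2) ∨
         (M.tr c.1 c.2.2.1 a e MoveSt.St c'.1 ∧ c'.2 = (c.2.1, e, c.2.2.2))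

section Sim

variable {A D : Type} (blank : D)

/-- Lists equal up to trailing blanks. -/
def LEq (l l' : List D) : Prop := ∀ i, l.getD i blank = l'.getD i blank

/-- Tapes equal up to trailing blanks on both sides. -/
def TEq (t t' : List D × D × List D) : Prop :=
  LEq blank t.1 t'.1 ∧ t.2.1 = t'.2.1 ∧ LEq blank t.2.2 t'.2.2

theorem LEq_refl (l : List D) : LEq blank l l := fun _ => rfl

theorem TEq_refl (t : List D × D × List D) : TEq blank t t :=
  ⟨LEq_refl blank _, rfl, LEq_refl blank _⟩

theorem TEq_trans {t₁ t₂ t₃ : List D × D × List D} (h : TEq blank t₁ t₂)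
    (h' : TEq blank t₂ t₃) : TEq blank t₁ t₃ :=
  ⟨fun i => (h.1 i).trans (h'.1 i), h.2.1.trans h'.2.1,
    fun i => (h.2.2 i).trans (h'.2.2 i)⟩

theorem LEq_cons (e : D) {r r' : List D} (h : LEq blank r r') :
    LEq blank (e :: r) (e :: r') := fun i => by
  cases i with
  | zero => rfl
  | succ n => simpa using h n

theorem moveL_teq {l l' r r' : List D} (e : D) (hl : LEq blank l l')
    (hr : LEq blank r r') :
    TEq blank (moveL blank l e r) (moveL blank l' e r') := by
  cases l with
  | nil =>
    cases l' with
    | nil => exact ⟨LEq_refl blank _, rfl, LEq_cons blank e hr⟩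
    | cons h t =>
      exact ⟨fun i => by simpa [moveL] using hl (i + 1), by simpa [moveL] using hl 0,
        LEq_cons blank e hr⟩
  | cons h t =>
    cases l' with
    | nil =>
      exact ⟨fun i => by simpa [moveL] using hl (i + 1), by simpa [moveL] using hl 0,
        LEq_cons blank e hr⟩
    | cons h' t' =>
      exact ⟨fun i => by simpa [moveL] using hl (i + 1), by simpa [moveL] using hl 0,
        LEq_cons blank e hr⟩

theorem moveR_teq {l l' r r' : List D} (e : D) (hl : LEq blank l l')
    (hr : LEq blank r r') :
    TEq blank (moveR blank l e r) (moveR blank l' e r') := by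
  cases r with
  | nil =>
    cases r' with
    | nil => exact ⟨LEq_cons blank e hl, rfl, LEq_refl blank _⟩
    | cons h t =>
      exact ⟨LEq_cons blank e hl, by simpa [moveR] using hr 0,
        fun i => by simpa [moveR] using hr (i + 1)⟩
  | cons h t =>
    cases r' with
    | nil =>
      exact ⟨LEq_cons blank e hl, by simpa [moveR] using hr 0,
        fun i => by simpa [moveR] using hr (i + 1)⟩
    | cons h' t' =>
      exact ⟨LEq_cons blank e hl, by simpa [moveR] using hr 0,
        fun i => by simpa [moveR] using hr (i + 1)⟩

/-- Moving right after moving left restores the tape (up to trailing blanks). -/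
theorem moveRL_teq (l r : List D) (e : D) :
    TEq blank (moveR blank (moveL blank l e r).1 (moveL blank l e r).2.1
      (moveL blank l e r).2.2) (l, e, r) := by
  cases l with
  | nil =>
    refine ⟨fun i => ?_, rfl, LEq_refl blank _⟩
    cases i <;> simp [moveL, moveR]
  | cons h t => exact TEq_refl blank _

/-- The ordinary RTM simulating an RTM with stay transitions: stay transitions are
replaced by a left move to a fresh (`Sum.inr`) state followed by a silent right move. -/
def stM (M : RTMst A D) : RTM A D where
  Q := M.Q ⊕ M.Q
  fin := by have := M.fin; exact inferInstance
  init := Sum.inl M.init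
  tr := fun q d a e m q' =>
    match q, q' with
    | Sum.inl s, Sum.inl t =>
        (M.tr s d a e MoveSt.L t ∧ m = Move.L) ∨ (M.tr s d a e MoveSt.R t ∧ m = Move.R)
    | Sum.inl s, Sum.inr t => M.tr s d a e MoveSt.St t ∧ m = Move.L
    | Sum.inr s, Sum.inl t => t = s ∧ a = none ∧ e = d ∧ m = Move.R
    | Sum.inr _, Sum.inr _ => False

/-- The bisimulation relation between configurations of the simulating machine and
configurations of the original machine. -/
def SimRel (M : RTMst A D) (c : (M.Q ⊕ M.Q) × List D × D × List D)
    (c' : M.Q × List D × D × List D) : Prop :=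
  match c.1 with
  | Sum.inl q => c'.1 = q ∧ TEq blank c.2 c'.2
  | Sum.inr q => c'.1 = q ∧
      TEq blank (moveR blank c.2.1 c.2.2.1 c.2.2.2) c'.2

/-- Every step of `M` from a state related to an `inl` state of `stM M` is matched by
a single step of `stM M`. -/
theorem stepInl (M : RTMst A D) {q : M.Q} {t1 t2 : List D × D × List D} {a : Option A}
    {c' : M.Q × List D × D × List D}
    (ht : TEq blank t1 t2) (hstep : (M.lts blank).tr (q, t2) a c') :
    ∃ c'', ((stM M).lts blank).tr (Sum.inl q, t1) a c'' ∧ SimRel blank M c'' c' := by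
  obtain ⟨hl1, hd, hr1⟩ := ht
  obtain ⟨e, h⟩ := hstep
  rcases h with ⟨htr, hmv⟩ | ⟨htr, hmv⟩ | ⟨htr, hmv⟩
  · refine ⟨(Sum.inl c'.1, moveL blank t1.1 e t1.2.2),
      ⟨e, Or.inl ⟨Or.inl ⟨hd ▸ htr, rfl⟩, rfl⟩⟩, rfl, ?_⟩
    rw [hmv]
    exact moveL_teq blank e hl1 hr1
  · refine ⟨(Sum.inl c'.1, moveR blank t1.1 e t1.2.2),
      ⟨e, Or.inr ⟨Or.inr ⟨hd ▸ htr, rfl⟩, rfl⟩⟩, rfl, ?_⟩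
    rw [hmv]
    exact moveR_teq blank e hl1 hr1
  · refine ⟨(Sum.inr c'.1, moveL blank t1.1 e t1.2.2),
      ⟨e, Or.inl ⟨⟨hd ▸ htr, rfl⟩, rfl⟩⟩, rfl, ?_⟩
    rw [hmv]
    exact TEq_trans blank (moveRL_teq blank t1.1 t1.2.2 e) ⟨hl1, rfl, hr1⟩

/-- Every step of `stM M` from an `inl` state is matched by a single step of `M`. -/
theorem stepInl' (M : RTMst A D) {q : M.Q} {t1 t2 : List D × D × List D} {a : Option A}
    {c' : (M.Q ⊕ M.Q) × List D × D × List D}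
    (ht : TEq blank t1 t2)
    (hstep : ((stM M).lts blank).tr (Sum.inl q, t1) a c') :
    ∃ c'', (M.lts blank).tr (q, t2) a c'' ∧ SimRel blank M c' c'' := by
  obtain ⟨hl1, hd, hr1⟩ := ht
  obtain ⟨e, h⟩ := hstep
  rcases h with ⟨htr, hmv⟩ | ⟨htr, hmv⟩
  · obtain ⟨q', t1'⟩ := c'
    cases q' with
    | inl t =>
      have htr' : (M.tr q t1.2.1 a e MoveSt.L t ∧ Move.L = Move.L) ∨
          (M.tr q t1.2.1 a e MoveSt.R t ∧ Move.L = Move.R) := htr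
      rcases htr' with ⟨hm, _⟩ | ⟨_, hbad⟩
      · refine ⟨(t, moveL blank t2.1 e t2.2.2), ⟨e, Or.inl ⟨hd ▸ hm, rfl⟩⟩, rfl, ?_⟩
        have hmv' : t1' = moveL blank t1.1 e t1.2.2 := hmv
        rw [hmv']
        exact moveL_teq blank e hl1 hr1
      · exact absurd hbad (by simp)
    | inr t =>
      have htr' : M.tr q t1.2.1 a e MoveSt.St t ∧ Move.L = Move.L := htr
      refine ⟨(t, (t2.1, e, t2.2.2)), ⟨e, Or.inr (Or.inr ⟨hd ▸ htr'.1, rfl⟩)⟩, rfl, ?_⟩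
      have hmv' : t1' = moveL blank t1.1 e t1.2.2 := hmv
      rw [hmv']
      exact TEq_trans blank (moveRL_teq blank t1.1 t1.2.2 e) ⟨hl1, rfl, hr1⟩
  · obtain ⟨q', t1'⟩ := c'
    cases q' with
    | inl t =>
      have htr' : (M.tr q t1.2.1 a e MoveSt.L t ∧ Move.R = Move.L) ∨
          (M.tr q t1.2.1 a e MoveSt.R t ∧ Move.R = Move.R) := htr
      rcases htr' with ⟨_, hbad⟩ | ⟨hm, _⟩
      · exact absurd hbad (by simp)
      · refine ⟨(t, moveR blank t2.1 e t2.2.2), ⟨e, Or.inr (Or.inl ⟨hd ▸ hm, rfl⟩)⟩, rfl, ?_⟩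
        have hmv' : t1' = moveR blank t1.1 e t1.2.2 := hmv
        rw [hmv']
        exact moveR_teq blank e hl1 hr1
    | inr t =>
      have htr' : M.tr q t1.2.1 a e MoveSt.St t ∧ Move.R = Move.L := htr
      exact absurd htr'.2 (by simp)

end Sim

/-- Every RTM with stay transitions can be simulated, up to divergence-preserving
branching bisimilarity, by an ordinary RTM using only left and right moves. -/
theorem stmt_17 {A D : Type} [Finite A] [Finite D] (blank : D) (M : RTMst A D) :
    ∃ M' : RTM A D, LTS.BBisimD (M'.lts blank) (M.lts blank) := by
  refine ⟨stM M, SimRel blank M, ⟨⟨?_, ?_⟩, ?_, ?_⟩, rfl, TEq_refl blank _⟩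
  · -- forward transfer condition
    rintro ⟨q1, t1⟩ ⟨q2, t2⟩ hR a c1' hstep
    cases q1 with
    | inl q =>
      have hR' : q2 = q ∧ TEq blank t1 t2 := hR
      obtain ⟨hq, ht⟩ := hR'
      subst hq
      obtain ⟨c'', hstep2, hRel⟩ := stepInl' blank M ht hstep
      exact ⟨(q2, t2), c'', Relation.ReflTransGen.refl, Or.inl hstep2, hR, hRel⟩
    | inr q =>
      have hR' : q2 = q ∧ TEq blank (moveR blank t1.1 t1.2.1 t1.2.2) t2 := hR
      obtain ⟨hq, ht⟩ := hR'
      obtain ⟨e, h⟩ := hstep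
      rcases h with ⟨htr, hmv⟩ | ⟨htr, hmv⟩
      · obtain ⟨p, t1'⟩ := c1'
        cases p with
        | inl p =>
          have htr' : p = q ∧ a = none ∧ e = t1.2.1 ∧ Move.L = Move.R := htr
          exact absurd htr'.2.2.2 (by simp)
        | inr p => exact False.elim htr
      · obtain ⟨p, t1'⟩ := c1'
        cases p with
        | inl p =>
          have htr' : p = q ∧ a = none ∧ e = t1.2.1 ∧ Move.R = Move.R := htr
          obtain ⟨hpq, ha, he, -⟩ := htr'
          subst hpq; subst ha; subst he
          have hmv' : t1' = moveR blank t1.1 t1.2.1 t1.2.2 := hmv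
          subst hmv'
          exact ⟨(q2, t2), (q2, t2), Relation.ReflTransGen.refl, Or.inr ⟨rfl, rfl⟩,
            hR, ⟨hq, ht⟩⟩
        | inr p => exact False.elim htr
  · -- backward transfer condition
    rintro ⟨q1, t1⟩ ⟨q2, t2⟩ hR a c2' hstep
    cases q1 with
    | inl q =>
      have hR' : q2 = q ∧ TEq blank t1 t2 := hR
      obtain ⟨hq, ht⟩ := hR'
      subst hq
      obtain ⟨c'', hstep1, hRel⟩ := stepInl blank M ht hstep
      exact ⟨(Sum.inl q2, t1), c'', Relation.ReflTransGen.refl, Or.inl hstep1, hR, hRel⟩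
    | inr q =>
      have hR' : q2 = q ∧ TEq blank (moveR blank t1.1 t1.2.1 t1.2.2) t2 := hR
      obtain ⟨hq, ht⟩ := hR'
      obtain ⟨c'', hstep1, hRel⟩ := stepInl blank M ht hstep
      refine ⟨(Sum.inl q2, moveR blank t1.1 t1.2.1 t1.2.2), c'',
        Relation.ReflTransGen.single ⟨t1.2.1, Or.inr ⟨⟨hq, rfl, rfl, rfl⟩, rfl⟩⟩,
        Or.inl hstep1, ⟨rfl, ht⟩, hRel⟩
  · -- divergence, left to right
    rintro ⟨q1, t1⟩ ⟨q2, t2⟩ hR f hf0 hfτ hfR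
    have key : ∀ i p, (f i).1 = Sum.inl p →
        ∃ s₂', Relation.TransGen (fun a b => (M.lts blank).tr a none b) (q2, t2) s₂' ∧
          ∃ j, SimRel blank M (f j) s₂' := by
      intro i p hp
      rcases hfi : f i with ⟨p', t⟩
      rw [hfi] at hp
      have hp' : p' = Sum.inl p := hp
      subst hp'
      have hRi := hfR i
      rw [hfi] at hRi
      have hRi' : q2 = p ∧ TEq blank t t2 := hRi
      obtain ⟨hq, ht⟩ := hRi'
      subst hq
      have hstep := hfτ i
      rw [hfi] at hstep
      obtain ⟨c'', h2, hRel⟩ := stepInl' blank M ht hstep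
      exact ⟨c'', Relation.TransGen.single h2, i + 1, hRel⟩
    rcases e0 : f 0 with ⟨p0, u0⟩
    cases p0 with
    | inl p => exact key 0 p (by rw [e0])
    | inr p =>
      rcases e1 : f 1 with ⟨p1, u1⟩
      cases p1 with
      | inl p' => exact key 1 p' (by rw [e1])
      | inr p' =>
        have hstep := hfτ 0
        rw [e0, e1] at hstep
        obtain ⟨e, h⟩ := hstep
        rcases h with ⟨htr, -⟩ | ⟨htr, -⟩ <;> exact False.elim htr
  · -- divergence, right to left
    rintro ⟨q1, t1⟩ ⟨q2, t2⟩ hR f hf0 hfτ hfR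
    have h1 := hfτ 0
    rw [hf0] at h1
    cases q1 with
    | inl q =>
      have hR' : q2 = q ∧ TEq blank t1 t2 := hR
      obtain ⟨hq, ht⟩ := hR'
      subst hq
      obtain ⟨c'', h2, hRel⟩ := stepInl blank M ht h1
      exact ⟨c'', Relation.TransGen.single h2, 1, hRel⟩
    | inr q =>
      have hR' : q2 = q ∧ TEq blank (moveR blank t1.1 t1.2.1 t1.2.2) t2 := hR
      obtain ⟨hq, ht⟩ := hR'
      obtain ⟨c'', h2, hRel⟩ := stepInl blank M ht h1
      have haux : ((stM M).lts blank).tr (Sum.inr q, t1) none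
          (Sum.inl q2, moveR blank t1.1 t1.2.1 t1.2.2) :=
        ⟨t1.2.1, Or.inr ⟨⟨hq, rfl, rfl, rfl⟩, rfl⟩⟩
      exact ⟨c'', Relation.TransGen.head haux (Relation.TransGen.single h2), 1, hRel⟩
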